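/- The Christoffel symbols of the Kähler metric on the Siegel–Jacobi disk, determined by Σ_α h_{α\bar{ε}} Γ^α_{βγ} = ∂h_{\bar{ε}β}/∂z_γ, are: Γ^z_{zz} = -λ\bar{η}, Γ^w_{zz} = λ, Γ^z_{zw} = -λ\bar{η}² + \bar{w}/P, Γ^w_{zw} = λ\bar{η}, Γ^z_{ww} = -λ\bar{η}³, Γ^w_{ww} = λ\bar{η}² + 2\bar{w}/P, where λ = μ/(2k), P = 1-w\bar{w}, η = (z+\bar{z}w)/P. -/

import Mathlib

open Complex

/-- Polarized metric coefficients of the Siegel–Jacobi disk, holomorphic functions of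
the independent variables `(z, z̄, w, w̄)`: `h_{z z̄}`, `h_{z w̄}`, `h_{w z̄}`, `h_{w w̄}`. -/
noncomputable def sjHzz (μ : ℝ) (_z _zb _w wb : ℂ) : ℂ := (μ : ℂ) / (1 - _w * wb)

noncomputable def sjHzw (μ : ℝ) (z zb w wb : ℂ) : ℂ :=
  (μ : ℂ) * ((z + zb * w) / (1 - w * wb)) / (1 - w * wb)

noncomputable def sjHwz (μ : ℝ) (z zb w wb : ℂ) : ℂ :=
  (μ : ℂ) * ((zb + z * wb) / (1 - w * wb)) / (1 - w * wb)

noncomputable def sjHww (k μ : ℝ) (z zb w wb : ℂ) : ℂ :=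
  (μ : ℂ) * ((z + zb * w) / (1 - w * wb)) * ((zb + z * wb) / (1 - w * wb)) /
      (1 - w * wb) + 2 * (k : ℂ) / (1 - w * wb) ^ 2

set_option maxHeartbeats 2000000 in
/-- The Christoffel symbols of the Kähler metric on the Siegel–Jacobi disk,
`Γ^z_{zz} = -λ η̄`, `Γ^w_{zz} = λ`, `Γ^z_{zw} = -λ η̄² + w̄/P`, `Γ^w_{zw} = λ η̄`,
`Γ^z_{ww} = -λ η̄³`, `Γ^w_{ww} = λ η̄² + 2 w̄/P` with `λ = μ/(2k)`, satisfy the defining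
linear systems `Σ_α h_{α ε̄} Γ^α_{βγ} = ∂ h_{β ε̄}/∂ z_γ` (Wirtinger derivatives being
complex derivatives of the polarized coefficients). -/
theorem siegelJacobi_christoffel (k μ : ℝ) (hk : 0 < k) (hμ : 0 < μ)
    (z w : ℂ) (hw : ‖w‖ < 1) :
    let zb := starRingEnd ℂ z
    let wb := starRingEnd ℂ w
    let P : ℂ := 1 - w * wb
    let ηb : ℂ := (zb + z * wb) / P
    let l : ℂ := (μ : ℂ) / (2 * (k : ℂ))
    let hzz := sjHzz μ z zb w wb
    let hzw := sjHzw μ z zb w wb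
    let hwz := sjHwz μ z zb w wb
    let hww := sjHww k μ z zb w wb
    let Γzzz : ℂ := -l * ηb
    let Γwzz : ℂ := l
    let Γzzw : ℂ := -l * ηb ^ 2 + wb / P
    let Γwzw : ℂ := l * ηb
    let Γzww : ℂ := -l * ηb ^ 3
    let Γwww : ℂ := l * ηb ^ 2 + 2 * wb / P
    (hzz * Γzzz + hwz * Γwzz = deriv (fun a => sjHzz μ a zb w wb) z) ∧
    (hzw * Γzzz + hww * Γwzz = deriv (fun a => sjHzw μ a zb w wb) z) ∧
    (hzz * Γzzw + hwz * Γwzw = deriv (fun a => sjHwz μ a zb w wb) z) ∧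
    (hzw * Γzzw + hww * Γwzw = deriv (fun a => sjHww k μ a zb w wb) z) ∧
    (hzz * Γzww + hwz * Γwww = deriv (fun b => sjHwz μ z zb b wb) w) ∧
    (hzw * Γzww + hww * Γwww = deriv (fun b => sjHww k μ z zb b wb) w) := by

  intro zb wb P ηb l hzz hzw hwz hww Γzzz Γwzz Γzzw Γwzw Γzww Γwww
  have hP : P ≠ 0 := by
    have h1 : Complex.normSq w < 1 := by
      rw [Complex.normSq_eq_norm_sq]
      have h0 : ‖w‖ < 1 := hw
      nlinarith [norm_nonneg w]
    unfold P wb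
    rw [Complex.mul_conj]
    intro h
    have h3 : (Complex.normSq w : ℂ) = 1 := by linear_combination -h
    have h2 : Complex.normSq w = 1 := by exact_mod_cast h3
    linarith
  unfold Γwww Γzww Γwzw Γzzw Γwzz Γzzz hww hwz hzw hzz l ηb P wb zb at *
  have hkc : ((k : ℂ)) ≠ 0 := by
    simpa using hk.ne'
  have hk2 : (2 * (k : ℂ)) ≠ 0 := mul_ne_zero two_ne_zero hkc
  set Z := starRingEnd ℂ z with hZ
  set W := starRingEnd ℂ w with hW
  have hden : HasDerivAt (fun b : ℂ => 1 - b * W) (-(1 * W)) w :=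
    ((hasDerivAt_id w).mul_const W).const_sub 1
  refine ⟨?_, ?_, ?_, ?_, ?_, ?_⟩
  · have h1 : HasDerivAt (fun a : ℂ => sjHzz μ a Z w W) 0 z := hasDerivAt_const z _
    rw [h1.deriv]
    simp only [sjHzz, sjHzw, sjHwz, sjHww]
    field_simp [hP, hkc]
    first
      | ring1
      | (rw [div_eq_iff (by simp [mul_eq_zero, pow_eq_zero_iff, hP, hkc])]; ring1)
      | (rw [add_mul, div_mul_eq_mul_div, add_comm, ← eq_sub_iff_add_eq,
          div_eq_iff (by simp [mul_eq_zero, pow_eq_zero_iff, hP, hkc])]; ring1)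
      | (simp only [add_mul, div_mul_eq_mul_div]
         field_simp [hP, hkc]
         ring1)
      | (simp only [add_mul, div_mul_eq_mul_div]
         field_simp [hP, hkc]
         rw [div_eq_iff (by simp [mul_eq_zero, pow_eq_zero_iff, hP, hkc])]; ring1)
      | (simp only [add_mul, div_mul_eq_mul_div]
         field_simp [hP, hkc]
         rw [add_div' _ _ _ (by simp [mul_eq_zero, pow_eq_zero_iff, hP, hkc]),
           div_add' _ _ _ (by simp [mul_eq_zero, pow_eq_zero_iff, hP, hkc]),
           div_eq_div_iff (by simp [mul_eq_zero, pow_eq_zero_iff, hP, hkc])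
             (by simp [mul_eq_zero, pow_eq_zero_iff, hP, hkc])]
         ring1)
  · have h1 : HasDerivAt (fun a : ℂ => sjHzw μ a Z w W) _ z :=
      ((((hasDerivAt_id z).add_const (Z * w)).div_const (1 - w * W)).const_mul
        ((μ : ℂ))).div_const (1 - w * W)
    rw [h1.deriv]
    simp only [sjHzz, sjHzw, sjHwz, sjHww]
    field_simp [hP, hkc]
    first
      | ring1
      | (rw [div_eq_iff (by simp [mul_eq_zero, pow_eq_zero_iff, hP, hkc])]; ring1)
      | (rw [add_mul, div_mul_eq_mul_div, add_comm, ← eq_sub_iff_add_eq,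
          div_eq_iff (by simp [mul_eq_zero, pow_eq_zero_iff, hP, hkc])]; ring1)
      | (simp only [add_mul, div_mul_eq_mul_div]
         field_simp [hP, hkc]
         ring1)
      | (simp only [add_mul, div_mul_eq_mul_div]
         field_simp [hP, hkc]
         rw [div_eq_iff (by simp [mul_eq_zero, pow_eq_zero_iff, hP, hkc])]; ring1)
      | (simp only [add_mul, div_mul_eq_mul_div]
         field_simp [hP, hkc]
         rw [add_div' _ _ _ (by simp [mul_eq_zero, pow_eq_zero_iff, hP, hkc]),
           div_add' _ _ _ (by simp [mul_eq_zero, pow_eq_zero_iff, hP, hkc]),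
           div_eq_div_iff (by simp [mul_eq_zero, pow_eq_zero_iff, hP, hkc])
             (by simp [mul_eq_zero, pow_eq_zero_iff, hP, hkc])]
         ring1)
  · have h1 : HasDerivAt (fun a : ℂ => sjHwz μ a Z w W) _ z :=
      (((((hasDerivAt_id z).mul_const W).const_add Z).div_const (1 - w * W)).const_mul
        ((μ : ℂ))).div_const (1 - w * W)
    rw [h1.deriv]
    simp only [sjHzz, sjHzw, sjHwz, sjHww]
    field_simp [hP, hkc]
    first
      | ring1
      | (rw [div_eq_iff (by simp [mul_eq_zero, pow_eq_zero_iff, hP, hkc])]; ring1)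
      | (rw [add_mul, div_mul_eq_mul_div, add_comm, ← eq_sub_iff_add_eq,
          div_eq_iff (by simp [mul_eq_zero, pow_eq_zero_iff, hP, hkc])]; ring1)
      | (simp only [add_mul, div_mul_eq_mul_div]
         field_simp [hP, hkc]
         ring1)
      | (simp only [add_mul, div_mul_eq_mul_div]
         field_simp [hP, hkc]
         rw [div_eq_iff (by simp [mul_eq_zero, pow_eq_zero_iff, hP, hkc])]; ring1)
      | (simp only [add_mul, div_mul_eq_mul_div]
         field_simp [hP, hkc]
         rw [add_div' _ _ _ (by simp [mul_eq_zero, pow_eq_zero_iff, hP, hkc]),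
           div_add' _ _ _ (by simp [mul_eq_zero, pow_eq_zero_iff, hP, hkc]),
           div_eq_div_iff (by simp [mul_eq_zero, pow_eq_zero_iff, hP, hkc])
             (by simp [mul_eq_zero, pow_eq_zero_iff, hP, hkc])]
         ring1)
  · have hA : HasDerivAt (fun a : ℂ => (μ : ℂ) * ((a + Z * w) / (1 - w * W))) _ z :=
      (((hasDerivAt_id z).add_const (Z * w)).div_const (1 - w * W)).const_mul ((μ : ℂ))
    have hB : HasDerivAt (fun a : ℂ => (Z + a * W) / (1 - w * W)) _ z :=
      (((hasDerivAt_id z).mul_const W).const_add Z).div_const (1 - w * W)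
    have h1 : HasDerivAt (fun a : ℂ => sjHww k μ a Z w W) _ z :=
      ((hA.mul hB).div_const (1 - w * W)).add_const (2 * (k : ℂ) / (1 - w * W) ^ 2)
    rw [h1.deriv]
    simp only [sjHzz, sjHzw, sjHwz, sjHww]
    field_simp [hP, hkc]
    first
      | ring1
      | (rw [div_eq_iff (by simp [mul_eq_zero, pow_eq_zero_iff, hP, hkc])]; ring1)
      | (rw [add_mul, div_mul_eq_mul_div, add_comm, ← eq_sub_iff_add_eq,
          div_eq_iff (by simp [mul_eq_zero, pow_eq_zero_iff, hP, hkc])]; ring1)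
      | (simp only [add_mul, div_mul_eq_mul_div]
         field_simp [hP, hkc]
         ring1)
      | (simp only [add_mul, div_mul_eq_mul_div]
         field_simp [hP, hkc]
         rw [div_eq_iff (by simp [mul_eq_zero, pow_eq_zero_iff, hP, hkc])]; ring1)
      | (simp only [add_mul, div_mul_eq_mul_div]
         field_simp [hP, hkc]
         rw [add_div' _ _ _ (by simp [mul_eq_zero, pow_eq_zero_iff, hP, hkc]),
           div_add' _ _ _ (by simp [mul_eq_zero, pow_eq_zero_iff, hP, hkc]),
           div_eq_div_iff (by simp [mul_eq_zero, pow_eq_zero_iff, hP, hkc])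
             (by simp [mul_eq_zero, pow_eq_zero_iff, hP, hkc])]
         ring1)
  · have h1 : HasDerivAt (fun b : ℂ => sjHwz μ z Z b W) _ w :=
      (((hasDerivAt_const w (Z + z * W)).div hden hP).const_mul ((μ : ℂ))).div hden hP
    rw [h1.deriv]
    simp only [Pi.mul_apply, Pi.div_apply, id]
    simp only [sjHzz, sjHzw, sjHwz, sjHww]
    field_simp [hP, hkc]
    first
      | ring1
      | (rw [div_eq_iff (by simp [mul_eq_zero, pow_eq_zero_iff, hP, hkc])]; ring1)
      | (rw [add_mul, div_mul_eq_mul_div, add_comm, ← eq_sub_iff_add_eq,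
          div_eq_iff (by simp [mul_eq_zero, pow_eq_zero_iff, hP, hkc])]; ring1)
      | (simp only [add_mul, div_mul_eq_mul_div]
         field_simp [hP, hkc]
         ring1)
      | (simp only [add_mul, div_mul_eq_mul_div]
         field_simp [hP, hkc]
         rw [div_eq_iff (by simp [mul_eq_zero, pow_eq_zero_iff, hP, hkc])]; ring1)
      | (simp only [add_mul, div_mul_eq_mul_div]
         field_simp [hP, hkc]
         rw [add_div' _ _ _ (by simp [mul_eq_zero, pow_eq_zero_iff, hP, hkc]),
           div_add' _ _ _ (by simp [mul_eq_zero, pow_eq_zero_iff, hP, hkc]),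
           div_eq_div_iff (by simp [mul_eq_zero, pow_eq_zero_iff, hP, hkc])
             (by simp [mul_eq_zero, pow_eq_zero_iff, hP, hkc])]
         ring1)
  · have hA : HasDerivAt (fun b : ℂ => (μ : ℂ) * ((z + Z * b) / (1 - b * W))) _ w :=
      ((((hasDerivAt_id w).const_mul Z).const_add z).div hden hP).const_mul ((μ : ℂ))
    have hB : HasDerivAt (fun b : ℂ => (Z + z * W) / (1 - b * W)) _ w :=
      (hasDerivAt_const w (Z + z * W)).div hden hP
    have hC : HasDerivAt (fun b : ℂ => 2 * (k : ℂ) / (1 - b * W) ^ 2) _ w :=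
      (hasDerivAt_const w (2 * (k : ℂ))).div (hden.pow 2) (pow_ne_zero 2 hP)
    have h1 : HasDerivAt (fun b : ℂ => sjHww k μ z Z b W) _ w :=
      (((hA.mul hB).div hden hP).add hC)
    rw [h1.deriv]
    simp only [Pi.mul_apply, Pi.div_apply, id]
    simp only [sjHzz, sjHzw, sjHwz, sjHww]
    field_simp [hP, hkc]
    first
      | ring1
      | (rw [div_eq_iff (by simp [mul_eq_zero, pow_eq_zero_iff, hP, hkc])]; ring1)
      | (rw [add_mul, div_mul_eq_mul_div, add_comm, ← eq_sub_iff_add_eq,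
          div_eq_iff (by simp [mul_eq_zero, pow_eq_zero_iff, hP, hkc])]; ring1)
      | (simp only [add_mul, div_mul_eq_mul_div]
         field_simp [hP, hkc]
         ring1)
      | (simp only [add_mul, div_mul_eq_mul_div]
         field_simp [hP, hkc]
         rw [div_eq_iff (by simp [mul_eq_zero, pow_eq_zero_iff, hP, hkc])]; ring1)
      | (simp only [add_mul, div_mul_eq_mul_div]
         field_simp [hP, hkc]
         rw [add_div' _ _ _ (by simp [mul_eq_zero, pow_eq_zero_iff, hP, hkc]),
           div_add' _ _ _ (by simp [mul_eq_zero, pow_eq_zero_iff, hP, hkc]),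
           div_eq_div_iff (by simp [mul_eq_zero, pow_eq_zero_iff, hP, hkc])
             (by simp [mul_eq_zero, pow_eq_zero_iff, hP, hkc])]
         ring1)
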